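/- Under the virtual-system assumption that each γ_p is invertible and γ_p(ξ(x₀,p,t)) = ξ(γ_p(x₀), p_v, t) for all x₀, t: if {(Xᵢ,[τᵢ₋₁,τᵢ])}ᵢ₌₁ʲ is a (K_v, p_v, [t_b,t_e])-reachtube of the virtual system, then {(γ_p⁻¹(Xᵢ),[τᵢ₋₁,τᵢ])}ᵢ₌₁ʲ is a (γ_p⁻¹(K_v), p, [t_b,t_e])-reachtube of the real system, i.e., Reach(γ_p⁻¹(K_v), p, [τᵢ₋₁,τᵢ]) ⊆ γ_p⁻¹(Xᵢ) for each i. -/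
import Mathlib


/-- Reachable states over a time interval `[a, b]` of the flow `ξ` with parameter `p`. -/
def Reach {n : ℕ} {P : Type*} (ξ : (Fin n → ℝ) → P → ℝ → (Fin n → ℝ))
    (K : Set (Fin n → ℝ)) (p : P) (a b : ℝ) : Set (Fin n → ℝ) :=
  {x | ∃ x₀ ∈ K, ∃ t ∈ Set.Icc a b, x = ξ x₀ p t}

/-- Under the virtual-system assumption (each `γ_p` invertible with
`γ_p (ξ x₀ p t) = ξ (γ_p x₀) p_v t`), if `{(Xᵢ,[τᵢ₋₁,τᵢ])}ᵢ` is a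
`(K_v, p_v, [t_b,t_e])`-reachtube of the virtual system, then
`{(γ_p⁻¹(Xᵢ),[τᵢ₋₁,τᵢ])}ᵢ` is a `(γ_p⁻¹(K_v), p, [t_b,t_e])`-reachtube of the real system. -/
theorem stmt_7 {n : ℕ} {P : Type*}
    (ξ : (Fin n → ℝ) → P → ℝ → (Fin n → ℝ))
    (p_v : P)
    (γ : P → (Fin n → ℝ) ≃ (Fin n → ℝ))
    (hsym : ∀ (p : P) (x₀ : Fin n → ℝ) (t : ℝ), γ p (ξ x₀ p t) = ξ (γ p x₀) p_v t)
    (K_v : Set (Fin n → ℝ)) (t_b t_e : ℝ)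
    (j : ℕ) (X : ℕ → Set (Fin n → ℝ)) (τ : ℕ → ℝ)
    (hτ0 : τ 0 = t_b) (hτj : τ j = t_e) (hmono : ∀ i < j, τ i < τ (i + 1))
    (htube : ∀ i < j, Reach ξ K_v p_v (τ i) (τ (i + 1)) ⊆ X i) :
    ∀ (p : P), ∀ i < j,
      Reach ξ ((γ p).symm '' K_v) p (τ i) (τ (i + 1)) ⊆ (γ p).symm '' X i := by
  intro p i hi x hx
  obtain ⟨x₀, ⟨y, hy, rfl⟩, t, ht, rfl⟩ := hx
  refine ⟨γ p (ξ ((γ p).symm y) p t), htube i hi ?_, Equiv.symm_apply_apply _ _⟩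
  exact ⟨y, hy, t, ht, by rw [hsym, Equiv.apply_symm_apply]⟩
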